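/- arXiv:1612.04106 — 2 statements merged into one kernel-verified Lean document; each statement's English description precedes it below -/
import Mathlib

section
/- (Green's formula) For any y ∈ Dom(L_max) and z ∈ Dom(L⁺_max) one has ∫_a^b ( D^[2]y(t)·conj(z(t)) − y(t)·conj(D^{2}z(t)) ) dt = ( D^[1]y·conj(z) − y·conj(D^{1}z) ) evaluated at t = b minus at t = a, where u·conj(v) denotes the standard inner product of vectors in ℂ^s. -/
open MeasureTheory Set Filter Topology Matrix
open scoped Matrix.Norms.L2Operator InnerProductSpace ENNReal

noncomputable section

namespace SL

abbrev Mat (s : ℕ) := Matrix (Fin s) (Fin s) ℂ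
abbrev V (s : ℕ) := EuclideanSpace ℂ (Fin s)
abbrev V2 (s : ℕ) := EuclideanSpace ℂ (Fin s ⊕ Fin s)

/-- matrix times vector, landing in Euclidean space -/
def mv {s : ℕ} (M : Mat s) (x : V s) : V s := WithLp.toLp 2 (fun i => M.mulVec x i)

/-- build a vector of `ℂ^{2s}` out of two vectors of `ℂ^s` -/
def el {s : ℕ} (x z : V s) : V2 s := WithLp.toLp 2 (fun i => Sum.elim x z i)

/-- condition (KM) -/
def KM (a b : ℝ) {s : ℕ} (p Q : ℝ → Mat s) : Prop :=
  (∀ᵐ t ∂(volume.restrict (Ioo a b)), IsUnit (p t)) ∧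
  IntegrableOn (fun t => (p t)⁻¹) (Ioo a b) ∧
  IntegrableOn (fun t => (p t)⁻¹ * Q t) (Ioo a b) ∧
  IntegrableOn (fun t => Q t * (p t)⁻¹) (Ioo a b) ∧
  IntegrableOn (fun t => Q t * (p t)⁻¹ * Q t) (Ioo a b)

/-- `y` belongs to the maximal domain, with quasi-derivative `u = D^[1]y` and
`g = D^[2]y`; this encodes absolute continuity of `y` and `D^[1]y` via integral
equations. -/
structure InMaxDom (a b : ℝ) {s : ℕ} (p Q : ℝ → Mat s) (y u g : ℝ → V s) : Prop where
  cy : ContinuousOn y (Icc a b)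
  cu : ContinuousOn u (Icc a b)
  hy : ∀ t ∈ Icc a b, y t = y a + ∫ τ in a..t,
        (mv ((p τ)⁻¹ * Q τ) (y τ) + mv (p τ)⁻¹ (u τ))
  hu : ∀ t ∈ Icc a b, u t = u a + ∫ τ in a..t,
        (g τ - mv (Q τ * (p τ)⁻¹ * Q τ) (y τ) - mv (Q τ * (p τ)⁻¹) (u τ))

variable (s : ℕ) (a b : ℝ)

/-- the Hilbert space `L²((a,b), ℂ^s)` -/
abbrev H := Lp (E := V s) (p := 2) (volume.restrict (Ioo a b))

variable {s a b}

/-- the graph of the maximal operator `L_max : y ↦ -D^[2]y` -/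
def maxGraph (a b : ℝ) {s : ℕ} (p Q : ℝ → Mat s) : Set (H s a b × H s a b) :=
  {fh | ∃ y u g : ℝ → V s, InMaxDom a b p Q y u g ∧
    MemLp g 2 (volume.restrict (Ioo a b)) ∧
    (⇑fh.1 : ℝ → V s) =ᵐ[volume.restrict (Ioo a b)] y ∧
    (⇑fh.2 : ℝ → V s) =ᵐ[volume.restrict (Ioo a b)] (fun t => -g t)}

/-- the graph of the minimal operator -/
def minGraph (a b : ℝ) {s : ℕ} (p Q : ℝ → Mat s) : Set (H s a b × H s a b) :=
  {fh | ∃ y u g : ℝ → V s, InMaxDom a b p Q y u g ∧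
    MemLp g 2 (volume.restrict (Ioo a b)) ∧
    (⇑fh.1 : ℝ → V s) =ᵐ[volume.restrict (Ioo a b)] y ∧
    (⇑fh.2 : ℝ → V s) =ᵐ[volume.restrict (Ioo a b)] (fun t => -g t) ∧
    y a = 0 ∧ u a = 0 ∧ y b = 0 ∧ u b = 0}

/-- graph of the operator `L_{α,β}` given by boundary conditions
`α·𝒴(a) + β·𝒴(b) = 0`, where `𝒴(c) = (y(c), D^[1]y(c))`. -/
def bcGraph (a b : ℝ) {s : ℕ} (p Q : ℝ → Mat s)
    (α β : Matrix (Fin s ⊕ Fin s) (Fin s ⊕ Fin s) ℂ) : Set (H s a b × H s a b) :=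
  {fh | ∃ y u g : ℝ → V s, InMaxDom a b p Q y u g ∧
    MemLp g 2 (volume.restrict (Ioo a b)) ∧
    (⇑fh.1 : ℝ → V s) =ᵐ[volume.restrict (Ioo a b)] y ∧
    (⇑fh.2 : ℝ → V s) =ᵐ[volume.restrict (Ioo a b)] (fun t => -g t) ∧
    α.mulVec (el (y a) (u a)) + β.mulVec (el (y b) (u b)) = 0}

/-- `μ` belongs to the resolvent set of the operator with graph `G`,
with resolvent `R = (L - μ)⁻¹`. -/
def IsResolventAt (G : Set (H s a b × H s a b)) (μ : ℂ) (R : H s a b →L[ℂ] H s a b) : Prop :=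
  (∀ fh ∈ G, R (fh.2 - μ • fh.1) = fh.1) ∧ ∀ h : H s a b, (R h, h + μ • R h) ∈ G


/-- `2s × 2s` matrix times vector in `ℂ^{2s}` -/
def mv2 {s : ℕ} (M : Matrix (Fin s ⊕ Fin s) (Fin s ⊕ Fin s) ℂ) (x : V2 s) : V2 s :=
  WithLp.toLp 2 (fun i => M.mulVec x i)

/-- boundary condition `(K - I)Γ₁y + i(K + I)Γ₂y = 0`, where
`Γ₁y = (D^[1]y(a), -D^[1]y(b))` and `Γ₂y = (y(a), y(b))` (here `u = D^[1]y`). -/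
def KBCplus (a b : ℝ) {s : ℕ} (K : V2 s →L[ℂ] V2 s) (y u : ℝ → V s) : Prop :=
  (K - 1) (el (u a) (-(u b))) + Complex.I • ((K + 1) (el (y a) (y b))) = 0

/-- boundary condition `(K - I)Γ₁y - i(K + I)Γ₂y = 0`. -/
def KBCminus (a b : ℝ) {s : ℕ} (K : V2 s →L[ℂ] V2 s) (y u : ℝ → V s) : Prop :=
  (K - 1) (el (u a) (-(u b))) - Complex.I • ((K + 1) (el (y a) (y b))) = 0

/-- the graph of the operator `L_K` -/
def LKGraph (a b : ℝ) {s : ℕ} (p Q : ℝ → Mat s) (K : V2 s →L[ℂ] V2 s) :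
    Set (H s a b × H s a b) :=
  {fh | ∃ y u g : ℝ → V s, InMaxDom a b p Q y u g ∧
    MemLp g 2 (volume.restrict (Ioo a b)) ∧
    (⇑fh.1 : ℝ → V s) =ᵐ[volume.restrict (Ioo a b)] y ∧
    (⇑fh.2 : ℝ → V s) =ᵐ[volume.restrict (Ioo a b)] (fun t => -g t) ∧
    KBCplus a b K y u}

/-- the graph of the operator `L^K` -/
def LKGraph' (a b : ℝ) {s : ℕ} (p Q : ℝ → Mat s) (K : V2 s →L[ℂ] V2 s) :
    Set (H s a b × H s a b) :=
  {fh | ∃ y u g : ℝ → V s, InMaxDom a b p Q y u g ∧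
    MemLp g 2 (volume.restrict (Ioo a b)) ∧
    (⇑fh.1 : ℝ → V s) =ᵐ[volume.restrict (Ioo a b)] y ∧
    (⇑fh.2 : ℝ → V s) =ᵐ[volume.restrict (Ioo a b)] (fun t => -g t) ∧
    KBCminus a b K y u}

/-- a densely defined operator `T` is dissipative if `Im (Tx, x) ≥ 0`;
note that `(Tx, x)` in the "physics" convention equals `⟪x, Tx⟫` in Mathlib's. -/
def Dissipative {s : ℕ} {a b : ℝ} (T : H s a b →ₗ.[ℂ] H s a b) : Prop :=
  ∀ x : T.domain, 0 ≤ (inner ℂ ((x : H s a b)) (T x) : ℂ).im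

def Accumulative {s : ℕ} {a b : ℝ} (T : H s a b →ₗ.[ℂ] H s a b) : Prop :=
  ∀ x : T.domain, (inner ℂ ((x : H s a b)) (T x) : ℂ).im ≤ 0

/-- maximal dissipative: densely defined, dissipative,
with no non-trivial dissipative extension -/
def MaximalDissipative {s : ℕ} {a b : ℝ} (T : H s a b →ₗ.[ℂ] H s a b) : Prop :=
  Dense (T.domain : Set (H s a b)) ∧ Dissipative T ∧
    ∀ T' : H s a b →ₗ.[ℂ] H s a b, T ≤ T' → Dissipative T' → T' = T

def MaximalAccumulative {s : ℕ} {a b : ℝ} (T : H s a b →ₗ.[ℂ] H s a b) : Prop :=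
  Dense (T.domain : Set (H s a b)) ∧ Accumulative T ∧
    ∀ T' : H s a b →ₗ.[ℂ] H s a b, T ≤ T' → Accumulative T' → T' = T



section GreenHelpers

lemma clm2_continuous {E F G : Type*} [NormedAddCommGroup E] [NormedAddCommGroup F]
    [NormedAddCommGroup G] [NormedSpace ℝ E] [NormedSpace ℝ F] [NormedSpace ℝ G]
    (B : E →L[ℝ] F →L[ℝ] G) : Continuous fun q : E × F => B q.1 q.2 :=
  (isBoundedBilinearMap_apply (𝕜 := ℝ)).continuous.comp
    ((B.continuous.comp continuous_fst).prodMk continuous_snd)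

/-- inner as a real-bilinear continuous map -/
noncomputable def innerR (n : ℕ) : V n →L[ℝ] V n →L[ℝ] ℂ :=
  LinearMap.mkContinuous₂
    (LinearMap.mk₂ ℝ (fun x w => (inner ℂ x w : ℂ))
      (fun x x' w => inner_add_left x x' w)
      (fun c x w => by
        show (inner ℂ (c • x) w : ℂ) = c • (inner ℂ x w : ℂ)
        rw [← algebraMap_smul ℂ c x, inner_smul_left]
        simp [Complex.real_smul])
      (fun x w w' => inner_add_right x w w')
      (fun c x w => by
        show (inner ℂ x (c • w) : ℂ) = c • (inner ℂ x w : ℂ)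
        rw [← algebraMap_smul ℂ c w, inner_smul_right]
        simp [Complex.real_smul]))
    1 (fun x w => by rw [one_mul]; exact norm_inner_le_norm x w)

@[simp] lemma innerR_apply {n : ℕ} (x w : V n) : innerR n x w = (inner ℂ x w : ℂ) := rfl

/-- `mulVec` as a real-bilinear continuous map -/
noncomputable def mvB (n : ℕ) : Mat n →L[ℝ] V n →L[ℝ] V n :=
  LinearMap.mkContinuous₂
    (LinearMap.mk₂ ℝ (fun M x => mv M x)
      (fun M N x => by ext i; simp [mv, Matrix.add_mulVec])
      (fun c M x => by ext i; simp [mv, Matrix.smul_mulVec])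
      (fun M x x' => by
        ext i
        simp [mv, Matrix.mulVec, dotProduct, mul_add, Finset.sum_add_distrib])
      (fun c M x => by
        ext i
        simp [mv, Matrix.mulVec, dotProduct, Finset.mul_sum, Complex.real_smul,
          mul_left_comm]))
    1 (fun M x => by rw [one_mul]; exact M.l2_opNorm_mulVec x)

@[simp] lemma mvB_apply {n : ℕ} (M : Mat n) (x : V n) : mvB n M x = mv M x := rfl

lemma inner_mv_conjTranspose {n : ℕ} (M : Mat n) (x w : V n) :
    (inner ℂ (mv Mᴴ x) w : ℂ) = inner ℂ x (mv M w) := by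
  have h1 : mv Mᴴ x = Matrix.toEuclideanLin Mᴴ x := by
    rw [Matrix.toEuclideanLin_apply]; rfl
  have h2 : mv M w = Matrix.toEuclideanLin M w := by
    rw [Matrix.toEuclideanLin_apply]; rfl
  rw [h1, h2, Matrix.toEuclideanLin_conjTranspose_eq_adjoint, LinearMap.adjoint_inner_left]

lemma integrableOn_conjTranspose {n : ℕ} {S : Set ℝ} {M : ℝ → Mat n}
    (hM : IntegrableOn M S) : IntegrableOn (fun t => (M t)ᴴ) S := by
  have hl : Continuous fun A : Mat n => Aᴴ := by
    let L : Mat n →ₗ[ℝ] Mat n :=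
      { toFun := fun A => Aᴴ
        map_add' := fun A B₀ => Matrix.conjTranspose_add A B₀
        map_smul' := fun r A => by
          ext i j
          simp [Matrix.conjTranspose_apply, star_smul] }
    exact L.continuous_of_finiteDimensional
  refine Integrable.mono' hM.norm (hl.comp_aestronglyMeasurable hM.aestronglyMeasurable) ?_
  exact Eventually.of_forall fun t => le_of_eq (Matrix.l2_opNorm_conjTranspose (M t))

lemma integrableOn_apply₂ {E F G : Type*} [NormedAddCommGroup E] [NormedAddCommGroup F]
    [NormedAddCommGroup G] [NormedSpace ℝ E] [NormedSpace ℝ F] [NormedSpace ℝ G]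
    (B : E →L[ℝ] F →L[ℝ] G) {c d : ℝ} {φ : ℝ → E} {g : ℝ → F}
    (hφ : IntegrableOn φ (Ioc c d)) (hgc : ContinuousOn g (Icc c d)) :
    IntegrableOn (fun t => B (φ t) (g t)) (Ioc c d) := by
  obtain ⟨C, hC⟩ := isCompact_Icc.exists_bound_of_continuousOn hgc
  have hgm : AEStronglyMeasurable g (volume.restrict (Ioc c d)) :=
    (hgc.mono Ioc_subset_Icc_self).aestronglyMeasurable measurableSet_Ioc
  refine Integrable.mono' (hφ.norm.mul_const (‖B‖ * max C 0))
    ((clm2_continuous B).comp_aestronglyMeasurable (hφ.aestronglyMeasurable.prodMk hgm)) ?_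
  filter_upwards [ae_restrict_mem measurableSet_Ioc] with t ht
  calc ‖B (φ t) (g t)‖ ≤ ‖B‖ * ‖φ t‖ * ‖g t‖ := B.le_opNorm₂ _ _
    _ ≤ ‖B‖ * ‖φ t‖ * max C 0 :=
        mul_le_mul_of_nonneg_left ((hC t (Ioc_subset_Icc_self ht)).trans (le_max_left _ _))
          (by positivity)
    _ = ‖φ t‖ * (‖B‖ * max C 0) := by ring

lemma integrableOn_mv {n : ℕ} {c d : ℝ} {M : ℝ → Mat n} {x : ℝ → V n}
    (hM : IntegrableOn M (Ioc c d)) (hx : ContinuousOn x (Icc c d)) :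
    IntegrableOn (fun t => mv (M t) (x t)) (Ioc c d) :=
  (integrableOn_apply₂ (mvB n) hM hx).congr (Eventually.of_forall fun t => rfl)

lemma integrableOn_Ioc_of_Ioo {α : Type*} [NormedAddCommGroup α] {c d : ℝ} {X : ℝ → α}
    (hX : IntegrableOn X (Ioo c d)) : IntegrableOn X (Ioc c d) := by
  have hμ : volume.restrict (Ioo c d) = volume.restrict (Ioc c d) :=
    Measure.restrict_congr_set Ioo_ae_eq_Ioc
  show Integrable X (volume.restrict (Ioc c d))
  rw [← hμ]
  exact hX

/-- integration by parts for indefinite integrals, via Fubini -/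
lemma parts {E F G : Type*} [NormedAddCommGroup E] [NormedAddCommGroup F]
    [NormedAddCommGroup G] [NormedSpace ℝ E] [NormedSpace ℝ F] [NormedSpace ℝ G]
    [CompleteSpace E] [CompleteSpace F] [CompleteSpace G]
    (B : E →L[ℝ] F →L[ℝ] G) {a b : ℝ} (hab : a ≤ b)
    {f : ℝ → E} {g : ℝ → F} {φ : ℝ → E} {ψ : ℝ → F}
    (hφ : IntegrableOn φ (Ioc a b)) (hψ : IntegrableOn ψ (Ioc a b))
    (hfc : ContinuousOn f (Icc a b)) (hgc : ContinuousOn g (Icc a b))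
    (hf : ∀ t ∈ Icc a b, f t = f a + ∫ τ in Ioc a t, φ τ)
    (hg : ∀ t ∈ Icc a b, g t = g a + ∫ τ in Ioc a t, ψ τ) :
    ∫ t in Ioc a b, (B (φ t) (g t) + B (f t) (ψ t)) =
      B (f b) (g b) - B (f a) (g a) := by
  have haed : ∀ c : ℝ, ∀ᵐ τ ∂(volume.restrict (Ioc a b)), τ ≠ c := by
    intro c
    refine ae_iff.2 ?_
    have hset : {τ : ℝ | ¬ τ ≠ c} = {c} := by ext; simp [not_not]
    rw [hset, Measure.restrict_apply (measurableSet_singleton c)]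
    exact le_antisymm ((measure_mono inter_subset_left).trans_eq Real.volume_singleton)
      zero_le
  have hφm := hφ.aestronglyMeasurable
  have hψm := hψ.aestronglyMeasurable
  set P : ℝ × ℝ → G := fun q => B (φ q.1) (ψ q.2) with hPdef
  have hPm : AEStronglyMeasurable P
      ((volume.restrict (Ioc a b)).prod (volume.restrict (Ioc a b))) :=
    (clm2_continuous B).comp_aestronglyMeasurable (hφm.comp_fst.prodMk hψm.comp_snd)
  have hPint : Integrable P ((volume.restrict (Ioc a b)).prod (volume.restrict (Ioc a b))) := by
    refine Integrable.mono' ((hφ.norm.const_mul ‖B‖).mul_prod hψ.norm) hPm ?_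
    exact Eventually.of_forall fun q => B.le_opNorm₂ _ _
  set W : Set (ℝ × ℝ) := {q | q.2 < q.1} with hWdef
  set U : Set (ℝ × ℝ) := {q | q.1 ≤ q.2} with hUdef
  have hWmeas : MeasurableSet W := measurableSet_lt measurable_snd measurable_fst
  have hUmeas : MeasurableSet U := measurableSet_le measurable_fst measurable_snd
  have hint1 : IntegrableOn (fun t => B (φ t) (g t)) (Ioc a b) := integrableOn_apply₂ B hφ hgc
  have hint2 : IntegrableOn (fun t => B (f t) (ψ t)) (Ioc a b) :=
    (integrableOn_apply₂ B.flip hψ hfc).congr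
      (Eventually.of_forall fun t => by simp [ContinuousLinearMap.flip_apply])
  have hT1 : ∫ t in Ioc a b, B (φ t) (g t)
      = B (∫ t in Ioc a b, φ t) (g a)
        + ∫ q, W.indicator P q
            ∂((volume.restrict (Ioc a b)).prod (volume.restrict (Ioc a b))) := by
    have step1 : ∀ᵐ t ∂(volume.restrict (Ioc a b)), B (φ t) (g t)
        = B (φ t) (g a) + ∫ τ in Ioc a b, W.indicator P (t, τ) := by
      filter_upwards [ae_restrict_mem measurableSet_Ioc] with t ht
      have htIcc : t ∈ Icc a b := Ioc_subset_Icc_self ht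
      have hψt : IntegrableOn ψ (Ioc a t) := hψ.mono_set (Ioc_subset_Ioc_right ht.2)
      have e1 : B (φ t) (g t) = B (φ t) (g a) + B (φ t) (∫ τ in Ioc a t, ψ τ) := by
        rw [hg t htIcc, map_add]
      rw [e1, ← (B (φ t)).integral_comp_comm hψt]
      congr 1
      have e2 : ∫ τ in Ioc a b, W.indicator P (t, τ)
          = ∫ τ in Ioc a b, (Ioc a t).indicator (fun τ => B (φ t) (ψ τ)) τ := by
        refine integral_congr_ae ?_
        filter_upwards [haed t, ae_restrict_mem measurableSet_Ioc] with τ hτne hτmem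
        by_cases hlt : τ < t
        · rw [Set.indicator_of_mem (show (t, τ) ∈ W from hlt),
            Set.indicator_of_mem (show τ ∈ Ioc a t from ⟨hτmem.1, hlt.le⟩)]
        · rw [Set.indicator_of_notMem (show (t, τ) ∉ W from hlt),
            Set.indicator_of_notMem (fun hmem' => hlt (lt_of_le_of_ne hmem'.2 hτne))]
      rw [e2, setIntegral_indicator measurableSet_Ioc,
        Set.inter_eq_self_of_subset_right (Ioc_subset_Ioc_right ht.2)]
    calc ∫ t in Ioc a b, B (φ t) (g t)
        = ∫ t in Ioc a b, (B (φ t) (g a) + ∫ τ in Ioc a b, W.indicator P (t, τ)) :=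
          integral_congr_ae step1
      _ = (∫ t in Ioc a b, B (φ t) (g a))
          + ∫ t in Ioc a b, (∫ τ in Ioc a b, W.indicator P (t, τ)) :=
          integral_add (integrableOn_apply₂ B hφ continuousOn_const)
            ((hPint.indicator hWmeas).integral_prod_left)
      _ = B (∫ t in Ioc a b, φ t) (g a) + ∫ q, W.indicator P q
            ∂((volume.restrict (Ioc a b)).prod (volume.restrict (Ioc a b))) := by
          congr 1
          · have := ContinuousLinearMap.integral_comp_comm (B.flip (g a)) hφ
            simpa [ContinuousLinearMap.flip_apply] using this
          · exact (integral_prod _ (hPint.indicator hWmeas)).symm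
  have hT2 : ∫ t in Ioc a b, B (f t) (ψ t)
      = B (f a) (∫ t in Ioc a b, ψ t)
        + ∫ q, U.indicator P q
            ∂((volume.restrict (Ioc a b)).prod (volume.restrict (Ioc a b))) := by
    set P' : ℝ × ℝ → G := fun q => B (φ q.2) (ψ q.1) with hP'def
    have hP'int : Integrable P'
        ((volume.restrict (Ioc a b)).prod (volume.restrict (Ioc a b))) := hPint.swap
    set W' : Set (ℝ × ℝ) := {q | q.2 ≤ q.1} with hW'def
    have hW'meas : MeasurableSet W' := measurableSet_le measurable_snd measurable_fst
    have step1 : ∀ᵐ t ∂(volume.restrict (Ioc a b)), B (f t) (ψ t)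
        = B (f a) (ψ t) + ∫ τ in Ioc a b, W'.indicator P' (t, τ) := by
      filter_upwards [ae_restrict_mem measurableSet_Ioc] with t ht
      have htIcc : t ∈ Icc a b := Ioc_subset_Icc_self ht
      have hφt : IntegrableOn φ (Ioc a t) := hφ.mono_set (Ioc_subset_Ioc_right ht.2)
      have e1 : B (f t) (ψ t)
          = B (f a) (ψ t) + B.flip (ψ t) (∫ τ in Ioc a t, φ τ) := by
        rw [hf t htIcc, map_add, ContinuousLinearMap.add_apply,
          ContinuousLinearMap.flip_apply]
      rw [e1, ← (B.flip (ψ t)).integral_comp_comm hφt]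
      congr 1
      have e2 : ∫ τ in Ioc a b, W'.indicator P' (t, τ)
          = ∫ τ in Ioc a b, (Ioc a t).indicator (fun τ => B.flip (ψ t) (φ τ)) τ := by
        refine setIntegral_congr_fun measurableSet_Ioc fun τ hτ => ?_
        by_cases hle : τ ≤ t
        · rw [Set.indicator_of_mem (show (t, τ) ∈ W' from hle),
            Set.indicator_of_mem (show τ ∈ Ioc a t from ⟨hτ.1, hle⟩)]
          rfl
        · rw [Set.indicator_of_notMem (show (t, τ) ∉ W' from hle),
            Set.indicator_of_notMem (fun hmem' => hle hmem'.2)]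
      rw [e2, setIntegral_indicator measurableSet_Ioc,
        Set.inter_eq_self_of_subset_right (Ioc_subset_Ioc_right ht.2)]
    have hswap : ∫ q, W'.indicator P' q
          ∂((volume.restrict (Ioc a b)).prod (volume.restrict (Ioc a b)))
        = ∫ q, U.indicator P q
          ∂((volume.restrict (Ioc a b)).prod (volume.restrict (Ioc a b))) := by
      rw [← integral_prod_swap (U.indicator P)]
      refine integral_congr_ae (Eventually.of_forall fun q => ?_)
      show W'.indicator P' q = U.indicator P q.swap
      by_cases hq : q.2 ≤ q.1
      · rw [Set.indicator_of_mem (show q ∈ W' from hq),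
          Set.indicator_of_mem (show q.swap ∈ U from hq)]
        rfl
      · rw [Set.indicator_of_notMem (show q ∉ W' from hq),
          Set.indicator_of_notMem (show q.swap ∉ U from hq)]
    calc ∫ t in Ioc a b, B (f t) (ψ t)
        = ∫ t in Ioc a b, (B (f a) (ψ t) + ∫ τ in Ioc a b, W'.indicator P' (t, τ)) :=
          integral_congr_ae step1
      _ = (∫ t in Ioc a b, B (f a) (ψ t))
          + ∫ t in Ioc a b, (∫ τ in Ioc a b, W'.indicator P' (t, τ)) :=
          integral_add ((B (f a)).integrable_comp hψ)
            ((hP'int.indicator hW'meas).integral_prod_left)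
      _ = B (f a) (∫ t in Ioc a b, ψ t) + ∫ q, U.indicator P q
            ∂((volume.restrict (Ioc a b)).prod (volume.restrict (Ioc a b))) := by
          rw [← hswap]
          congr 1
          · exact (B (f a)).integral_comp_comm hψ
          · exact (integral_prod _ (hP'int.indicator hW'meas)).symm
  have hsum : (∫ q, W.indicator P q
        ∂((volume.restrict (Ioc a b)).prod (volume.restrict (Ioc a b))))
      + (∫ q, U.indicator P q
        ∂((volume.restrict (Ioc a b)).prod (volume.restrict (Ioc a b))))
      = B (∫ t in Ioc a b, φ t) (∫ t in Ioc a b, ψ t) := by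
    rw [← integral_add (hPint.indicator hWmeas) (hPint.indicator hUmeas)]
    have hpt : ∀ q, W.indicator P q + U.indicator P q = P q := by
      intro q
      by_cases hq : q.2 < q.1
      · rw [Set.indicator_of_mem (show q ∈ W from hq),
          Set.indicator_of_notMem (show q ∉ U from not_le.2 hq), add_zero]
      · rw [Set.indicator_of_notMem (show q ∉ W from hq),
          Set.indicator_of_mem (show q ∈ U from not_lt.1 hq), zero_add]
    calc ∫ q, (W.indicator P q + U.indicator P q)
          ∂((volume.restrict (Ioc a b)).prod (volume.restrict (Ioc a b)))
        = ∫ q, P q ∂((volume.restrict (Ioc a b)).prod (volume.restrict (Ioc a b))) := by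
          simp_rw [hpt]
      _ = ∫ t in Ioc a b, (∫ τ in Ioc a b, P (t, τ)) := integral_prod _ hPint
      _ = ∫ t in Ioc a b, B (φ t) (∫ τ in Ioc a b, ψ τ) :=
          integral_congr_ae (Eventually.of_forall fun t => (B (φ t)).integral_comp_comm hψ)
      _ = B (∫ t in Ioc a b, φ t) (∫ t in Ioc a b, ψ t) := by
          have := ContinuousLinearMap.integral_comp_comm
            (B.flip (∫ τ in Ioc a b, ψ τ)) hφ
          simpa [ContinuousLinearMap.flip_apply] using this
  have hfb : f b = f a + ∫ t in Ioc a b, φ t := hf b ⟨hab, le_rfl⟩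
  have hgb : g b = g a + ∫ t in Ioc a b, ψ t := hg b ⟨hab, le_rfl⟩
  rw [integral_add hint1 hint2, hT1, hT2, hfb, hgb]
  simp only [map_add, ContinuousLinearMap.add_apply]
  rw [← hsum]
  abel

end GreenHelpers

/-- Green's formula: for `y ∈ Dom(L_max)` (with `u = D^[1]y`,
`g = D^[2]y`) and `z ∈ Dom(L⁺_max)` (with `v = D^{1}z`, `h = D^{2}z`),
`∫_a^b (D^[2]y·conj z − y·conj D^{2}z) dt = (D^[1]y·conj z − y·conj D^{1}z)|_a^b`.
Here `x·conj w = ⟪w, x⟫` in Mathlib's convention for the inner product on `ℂ^s`. -/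
theorem stmt1 (s : ℕ) (a b : ℝ) (hab : a < b) (p Q : ℝ → Mat s)
    (hKM : KM a b p Q)
    (y u g z v h : ℝ → V s)
    (hy : InMaxDom a b p Q y u g)
    (hg : MemLp g 2 (volume.restrict (Ioo a b)))
    (hz : InMaxDom a b (fun t => (p t)ᴴ) (fun t => (Q t)ᴴ) z v h)
    (hh : MemLp h 2 (volume.restrict (Ioo a b))) :
    ∫ t in Ioo a b, ((inner ℂ (z t) (g t) : ℂ) - (inner ℂ (h t) (y t) : ℂ)) =
      ((inner ℂ (z b) (u b) : ℂ) - (inner ℂ (v b) (y b) : ℂ)) -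
        ((inner ℂ (z a) (u a) : ℂ) - (inner ℂ (v a) (y a) : ℂ)) := by
  obtain ⟨hunit, hpI, hpQI, hQpI, hQpQI⟩ := hKM
  haveI hfin : IsFiniteMeasure (volume.restrict (Ioo a b)) :=
    ⟨by rw [Measure.restrict_apply_univ]; exact measure_Ioo_lt_top⟩
  have hgI : IntegrableOn g (Ioc a b) := integrableOn_Ioc_of_Ioo (hg.integrable one_le_two)
  have hhI : IntegrableOn h (Ioc a b) := integrableOn_Ioc_of_Ioo (hh.integrable one_le_two)
  have hp' : IntegrableOn (fun t => (p t)⁻¹) (Ioc a b) := integrableOn_Ioc_of_Ioo hpI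
  have hpQ' : IntegrableOn (fun t => (p t)⁻¹ * Q t) (Ioc a b) := integrableOn_Ioc_of_Ioo hpQI
  have hQp' : IntegrableOn (fun t => Q t * (p t)⁻¹) (Ioc a b) := integrableOn_Ioc_of_Ioo hQpI
  have hQpQ' : IntegrableOn (fun t => Q t * (p t)⁻¹ * Q t) (Ioc a b) :=
    integrableOn_Ioc_of_Ioo hQpQI
  have hpH : IntegrableOn (fun t => ((p t)ᴴ)⁻¹) (Ioc a b) := by
    have he : (fun t => ((p t)ᴴ)⁻¹) = fun t => ((p t)⁻¹)ᴴ := by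
      funext t; rw [Matrix.conjTranspose_nonsing_inv]
    rw [he]; exact integrableOn_conjTranspose hp'
  have hpQH : IntegrableOn (fun t => ((p t)ᴴ)⁻¹ * (Q t)ᴴ) (Ioc a b) := by
    have he : (fun t => ((p t)ᴴ)⁻¹ * (Q t)ᴴ) = fun t => (Q t * (p t)⁻¹)ᴴ := by
      funext t; rw [Matrix.conjTranspose_mul, Matrix.conjTranspose_nonsing_inv]
    rw [he]; exact integrableOn_conjTranspose hQp'
  have hQpH : IntegrableOn (fun t => (Q t)ᴴ * ((p t)ᴴ)⁻¹) (Ioc a b) := by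
    have he : (fun t => (Q t)ᴴ * ((p t)ᴴ)⁻¹) = fun t => ((p t)⁻¹ * Q t)ᴴ := by
      funext t; rw [Matrix.conjTranspose_mul, Matrix.conjTranspose_nonsing_inv]
    rw [he]; exact integrableOn_conjTranspose hpQ'
  have hQpQH : IntegrableOn (fun t => (Q t)ᴴ * ((p t)ᴴ)⁻¹ * (Q t)ᴴ) (Ioc a b) := by
    have he : (fun t => (Q t)ᴴ * ((p t)ᴴ)⁻¹ * (Q t)ᴴ)
        = fun t => (Q t * (p t)⁻¹ * Q t)ᴴ := by
      funext t
      rw [Matrix.conjTranspose_mul, Matrix.conjTranspose_mul,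
        Matrix.conjTranspose_nonsing_inv, Matrix.mul_assoc]
    rw [he]; exact integrableOn_conjTranspose hQpQ'
  set φy : ℝ → V s := fun τ => mv ((p τ)⁻¹ * Q τ) (y τ) + mv (p τ)⁻¹ (u τ) with hφydef
  set φu : ℝ → V s := fun τ =>
    g τ - mv (Q τ * (p τ)⁻¹ * Q τ) (y τ) - mv (Q τ * (p τ)⁻¹) (u τ) with hφudef
  set φz : ℝ → V s := fun τ =>
    mv (((p τ)ᴴ)⁻¹ * (Q τ)ᴴ) (z τ) + mv ((p τ)ᴴ)⁻¹ (v τ) with hφzdef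
  set φv : ℝ → V s := fun τ =>
    h τ - mv ((Q τ)ᴴ * ((p τ)ᴴ)⁻¹ * (Q τ)ᴴ) (z τ)
        - mv ((Q τ)ᴴ * ((p τ)ᴴ)⁻¹) (v τ) with hφvdef
  have hφyI : IntegrableOn φy (Ioc a b) :=
    (integrableOn_mv hpQ' hy.cy).add (integrableOn_mv hp' hy.cu)
  have hφuI : IntegrableOn φu (Ioc a b) :=
    (hgI.sub (integrableOn_mv hQpQ' hy.cy)).sub (integrableOn_mv hQp' hy.cu)
  have hφzI : IntegrableOn φz (Ioc a b) :=
    (integrableOn_mv hpQH hz.cy).add (integrableOn_mv hpH hz.cu)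
  have hφvI : IntegrableOn φv (Ioc a b) :=
    (hhI.sub (integrableOn_mv hQpQH hz.cy)).sub (integrableOn_mv hQpH hz.cu)
  have hyrep : ∀ t ∈ Icc a b, y t = y a + ∫ τ in Ioc a t, φy τ := by
    intro t ht
    have h0 := hy.hy t ht
    rwa [intervalIntegral.integral_of_le ht.1] at h0
  have hurep : ∀ t ∈ Icc a b, u t = u a + ∫ τ in Ioc a t, φu τ := by
    intro t ht
    have h0 := hy.hu t ht
    rwa [intervalIntegral.integral_of_le ht.1] at h0
  have hzrep : ∀ t ∈ Icc a b, z t = z a + ∫ τ in Ioc a t, φz τ := by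
    intro t ht
    have h0 := hz.hy t ht
    rwa [intervalIntegral.integral_of_le ht.1] at h0
  have hvrep : ∀ t ∈ Icc a b, v t = v a + ∫ τ in Ioc a t, φv τ := by
    intro t ht
    have h0 := hz.hu t ht
    rwa [intervalIntegral.integral_of_le ht.1] at h0
  have P1 := parts (innerR s) hab.le hφzI hφuI hz.cy hy.cu hzrep hurep
  have P2 := parts (innerR s) hab.le hφvI hφyI hz.cu hy.cy hvrep hyrep
  have key : ∀ t, (innerR s (φz t) (u t) + innerR s (z t) (φu t))
      - (innerR s (φv t) (y t) + innerR s (v t) (φy t))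
      = (inner ℂ (z t) (g t) : ℂ) - (inner ℂ (h t) (y t) : ℂ) := by
    intro t
    simp only [hφzdef, hφudef, hφvdef, hφydef, innerR_apply]
    rw [show (Q t)ᴴ * ((p t)ᴴ)⁻¹ * (Q t)ᴴ = (Q t * (p t)⁻¹ * Q t)ᴴ by
        rw [Matrix.conjTranspose_mul, Matrix.conjTranspose_mul,
          Matrix.conjTranspose_nonsing_inv, Matrix.mul_assoc],
      show ((p t)ᴴ)⁻¹ * (Q t)ᴴ = (Q t * (p t)⁻¹)ᴴ by
        rw [Matrix.conjTranspose_mul, Matrix.conjTranspose_nonsing_inv],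
      show (Q t)ᴴ * ((p t)ᴴ)⁻¹ = ((p t)⁻¹ * Q t)ᴴ by
        rw [Matrix.conjTranspose_mul, Matrix.conjTranspose_nonsing_inv],
      show ((p t)ᴴ)⁻¹ = ((p t)⁻¹)ᴴ by rw [Matrix.conjTranspose_nonsing_inv]]
    simp only [inner_add_left, inner_sub_left, inner_add_right, inner_sub_right,
      inner_mv_conjTranspose]
    ring
  have int1 : IntegrableOn (fun t => innerR s (φz t) (u t)) (Ioc a b) :=
    integrableOn_apply₂ (innerR s) hφzI hy.cu
  have int2 : IntegrableOn (fun t => innerR s (z t) (φu t)) (Ioc a b) :=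
    (integrableOn_apply₂ (innerR s).flip hφuI hz.cy).congr
      (Eventually.of_forall fun t => by simp [ContinuousLinearMap.flip_apply])
  have int3 : IntegrableOn (fun t => innerR s (φv t) (y t)) (Ioc a b) :=
    integrableOn_apply₂ (innerR s) hφvI hy.cy
  have int4 : IntegrableOn (fun t => innerR s (v t) (φy t)) (Ioc a b) :=
    (integrableOn_apply₂ (innerR s).flip hφyI hz.cu).congr
      (Eventually.of_forall fun t => by simp [ContinuousLinearMap.flip_apply])
  calc ∫ t in Ioo a b, ((inner ℂ (z t) (g t) : ℂ) - (inner ℂ (h t) (y t) : ℂ))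
      = ∫ t in Ioc a b, ((inner ℂ (z t) (g t) : ℂ) - (inner ℂ (h t) (y t) : ℂ)) :=
        (integral_Ioc_eq_integral_Ioo).symm
    _ = ∫ t in Ioc a b, ((innerR s (φz t) (u t) + innerR s (z t) (φu t))
          - (innerR s (φv t) (y t) + innerR s (v t) (φy t))) :=
        integral_congr_ae (Eventually.of_forall fun t => (key t).symm)
    _ = (∫ t in Ioc a b, (innerR s (φz t) (u t) + innerR s (z t) (φu t)))
        - ∫ t in Ioc a b, (innerR s (φv t) (y t) + innerR s (v t) (φy t)) :=
        integral_sub (int1.add int2) (int3.add int4)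
    _ = ((inner ℂ (z b) (u b) : ℂ) - (inner ℂ (v b) (y b) : ℂ)) -
        ((inner ℂ (z a) (u a) : ℂ) - (inner ℂ (v a) (y a) : ℂ)) := by
        rw [P1, P2]
        simp only [innerR_apply]
        ring


end SL
end
end

section
/- Let K ∈ M_{2s}(ℂ) with block decomposition K = (K_{11}, K_{12}; K_{21}, K_{22}) into s×s blocks. The subspace W = {(u_a, u_b, v_a, v_b) ∈ (ℂ^s)^4 : (K − I)(u_a, u_b) + i(K + I)(v_a, v_b) = 0} decomposes as a direct product W = W_a × W_b of subspaces W_a ⊆ {(u_a, v_a)} ≅ ℂ^{2s} and W_b ⊆ {(u_b, v_b)} ≅ ℂ^{2s} if and only if K_{12} = K_{21} = 0. -/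
open MeasureTheory Set Filter Topology Matrix
open scoped Matrix.Norms.L2Operator InnerProductSpace ENNReal

noncomputable section

namespace SL

variable (s : ℕ) (a b : ℝ)

variable {s a b}

section Stmt17Aux

lemma elim_add {s : ℕ} (x y x' y' : Fin s → ℂ) :
    Sum.elim x y + Sum.elim x' y' = Sum.elim (x + x') (y + y') := by
  funext i; cases i <;> rfl

lemma elim_smul {s : ℕ} (c : ℂ) (x y : Fin s → ℂ) :
    c • Sum.elim x y = Sum.elim (c • x) (c • y) := by
  funext i; cases i <;> rfl

lemma elim_eq_zero {s : ℕ} (x y : Fin s → ℂ) :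
    Sum.elim x y = 0 ↔ x = 0 ∧ y = 0 := by
  constructor
  · intro h
    constructor <;> funext i
    · exact congrFun h (Sum.inl i)
    · exact congrFun h (Sum.inr i)
  · rintro ⟨rfl, rfl⟩; funext i; cases i <;> rfl

lemma key {s : ℕ} (K : Matrix (Fin s ⊕ Fin s) (Fin s ⊕ Fin s) ℂ)
    (w z : Fin s ⊕ Fin s → ℂ) :
    (K - 1).mulVec w + Complex.I • (K + 1).mulVec z
      = K.mulVec (w + Complex.I • z) - (w - Complex.I • z) := by
  simp only [Matrix.sub_mulVec, Matrix.add_mulVec, Matrix.mulVec_add,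
    Matrix.mulVec_smul, Matrix.one_mulVec, smul_add, smul_sub]
  abel

noncomputable def bcMap {s : ℕ} (A : Matrix (Fin s) (Fin s) ℂ) :
    ((Fin s → ℂ) × (Fin s → ℂ)) →ₗ[ℂ] (Fin s → ℂ) :=
  (A - 1).mulVecLin.comp (LinearMap.fst ℂ _ _)
    + Complex.I • (A + 1).mulVecLin.comp (LinearMap.snd ℂ _ _)

lemma mem_bcker {s : ℕ} (A : Matrix (Fin s) (Fin s) ℂ) (u v : Fin s → ℂ) :
    (u, v) ∈ LinearMap.ker (bcMap A) ↔
      (A - 1).mulVec u + Complex.I • (A + 1).mulVec v = 0 := by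
  simp [bcMap, LinearMap.mem_ker, Matrix.add_mulVec, Matrix.sub_mulVec, Matrix.one_mulVec, smul_add]

end Stmt17Aux

/-- the subspace
`W = {(u_a, u_b, v_a, v_b) : (K - I)(u_a, u_b) + i(K + I)(v_a, v_b) = 0}`
decomposes as a direct product `W = W_a × W_b` (with `W_a` in the
`(u_a, v_a)`-variables and `W_b` in the `(u_b, v_b)`-variables) iff
`K₁₂ = K₂₁ = 0`. -/
theorem stmt17 (s : ℕ)
    (K : Matrix (Fin s ⊕ Fin s) (Fin s ⊕ Fin s) ℂ) :
    (∃ (Wa Wb : Submodule ℂ ((Fin s → ℂ) × (Fin s → ℂ))),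
      ∀ ua ub va vb : Fin s → ℂ,
        ((K - 1).mulVec (Sum.elim ua ub)
            + Complex.I • ((K + 1).mulVec (Sum.elim va vb)) = 0
          ↔ ((ua, va) ∈ Wa ∧ (ub, vb) ∈ Wb)))
    ↔ (K.toBlocks₁₂ = 0 ∧ K.toBlocks₂₁ = 0) := by
  constructor
  · rintro ⟨Wa, Wb, hiff⟩
    -- for every p, the pair built from p solves the boundary equation
    have mem : ∀ p : Fin s ⊕ Fin s → ℂ,
        ((fun j => ((2:ℂ)⁻¹ • (p + K.mulVec p)) (Sum.inl j),
          fun j => ((Complex.I/2) • (K.mulVec p - p)) (Sum.inl j)) ∈ Wa) ∧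
        ((fun j => ((2:ℂ)⁻¹ • (p + K.mulVec p)) (Sum.inr j),
          fun j => ((Complex.I/2) • (K.mulVec p - p)) (Sum.inr j)) ∈ Wb) := by
      intro p
      set u : Fin s ⊕ Fin s → ℂ := (2:ℂ)⁻¹ • (p + K.mulVec p) with hu
      set v : Fin s ⊕ Fin s → ℂ := (Complex.I/2) • (K.mulVec p - p) with hv
      have he1 : Sum.elim (fun j => u (Sum.inl j)) (fun j => u (Sum.inr j)) = u := by
        funext i; cases i <;> rfl
      have he2 : Sum.elim (fun j => v (Sum.inl j)) (fun j => v (Sum.inr j)) = v := by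
        funext i; cases i <;> rfl
      apply (hiff _ _ _ _).mp
      rw [he1, he2, key, sub_eq_zero]
      have h1 : u + Complex.I • v = p := by
        funext i
        simp only [hu, hv, Pi.add_apply, Pi.smul_apply, Pi.sub_apply, smul_eq_mul]
        linear_combination (K.mulVec p i - p i) / 2 * Complex.I_sq
      have h2 : u - Complex.I • v = K.mulVec p := by
        funext i
        simp only [hu, hv, Pi.add_apply, Pi.smul_apply, Pi.sub_apply, smul_eq_mul]
        linear_combination (p i - K.mulVec p i) / 2 * Complex.I_sq
      rw [h1, h2]
    have main : ∀ pa pb : Fin s → ℂ,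
        K.mulVec (Sum.elim pa pb)
          = Sum.elim (fun i => K.mulVec (Sum.elim pa 0) (Sum.inl i))
              (fun i => K.mulVec (Sum.elim 0 pb) (Sum.inr i)) := by
      intro pa pb
      have hA := (mem (Sum.elim pa 0)).1
      have hB := (mem (Sum.elim 0 pb)).2
      have hcond := (hiff _ _ _ _).mpr ⟨hA, hB⟩
      rw [key, sub_eq_zero] at hcond
      set p1 : Fin s ⊕ Fin s → ℂ := Sum.elim pa 0 with hp1
      set p2 : Fin s ⊕ Fin s → ℂ := Sum.elim 0 pb with hp2
      have hW : ((Sum.elim (fun j => ((2:ℂ)⁻¹ • (p1 + K.mulVec p1)) (Sum.inl j))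
              (fun j => ((2:ℂ)⁻¹ • (p2 + K.mulVec p2)) (Sum.inr j)) : Fin s ⊕ Fin s → ℂ))
            + Complex.I • (Sum.elim (fun j => ((Complex.I/2) • (K.mulVec p1 - p1)) (Sum.inl j))
              (fun j => ((Complex.I/2) • (K.mulVec p2 - p2)) (Sum.inr j)) : Fin s ⊕ Fin s → ℂ)
          = Sum.elim pa pb := by
        funext i
        cases i with
        | inl i =>
          simp only [Pi.add_apply, Pi.smul_apply, Sum.elim_inl, Pi.sub_apply, smul_eq_mul]
          have h : p1 (Sum.inl i) = pa i := rfl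
          rw [h]
          linear_combination (K.mulVec p1 (Sum.inl i) - pa i) / 2 * Complex.I_sq
        | inr i =>
          simp only [Pi.add_apply, Pi.smul_apply, Sum.elim_inr, Pi.sub_apply, smul_eq_mul]
          have h : p2 (Sum.inr i) = pb i := rfl
          rw [h]
          linear_combination (K.mulVec p2 (Sum.inr i) - pb i) / 2 * Complex.I_sq
      have hQ : ((Sum.elim (fun j => ((2:ℂ)⁻¹ • (p1 + K.mulVec p1)) (Sum.inl j))
              (fun j => ((2:ℂ)⁻¹ • (p2 + K.mulVec p2)) (Sum.inr j)) : Fin s ⊕ Fin s → ℂ))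
            - Complex.I • (Sum.elim (fun j => ((Complex.I/2) • (K.mulVec p1 - p1)) (Sum.inl j))
              (fun j => ((Complex.I/2) • (K.mulVec p2 - p2)) (Sum.inr j)) : Fin s ⊕ Fin s → ℂ)
          = Sum.elim (fun i => K.mulVec p1 (Sum.inl i)) (fun i => K.mulVec p2 (Sum.inr i)) := by
        funext i
        cases i with
        | inl i =>
          simp only [Pi.sub_apply, Pi.add_apply, Pi.smul_apply, Sum.elim_inl, smul_eq_mul]
          linear_combination (p1 (Sum.inl i) - K.mulVec p1 (Sum.inl i)) / 2 * Complex.I_sq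
        | inr i =>
          simp only [Pi.sub_apply, Pi.add_apply, Pi.smul_apply, Sum.elim_inr, smul_eq_mul]
          linear_combination (p2 (Sum.inr i) - K.mulVec p2 (Sum.inr i)) / 2 * Complex.I_sq
      rw [hW, hQ] at hcond
      exact hcond
    constructor
    · ext i j
      have h := congrFun (main 0 (Pi.single j 1)) (Sum.inl i)
      have hz : (Sum.elim (0 : Fin s → ℂ) (0 : Fin s → ℂ)) = (0 : Fin s ⊕ Fin s → ℂ) := by
        funext k; cases k <;> rfl
      have hsingle : (Sum.elim (0 : Fin s → ℂ) (Pi.single j 1) : Fin s ⊕ Fin s → ℂ)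
          = Pi.single (Sum.inr j) 1 := by
        funext k
        cases k with
        | inl k => simp [Pi.single_apply]
        | inr k => simp [Pi.single_apply, Sum.inr.injEq]
      rw [hsingle] at h
      simp only [Sum.elim_inl, hz, Matrix.mulVec_zero, Pi.zero_apply,
        Matrix.mulVec_single] at h
      simpa [Matrix.toBlocks₁₂] using h
    · ext i j
      have h := congrFun (main (Pi.single j 1) 0) (Sum.inr i)
      have hz : (Sum.elim (0 : Fin s → ℂ) (0 : Fin s → ℂ)) = (0 : Fin s ⊕ Fin s → ℂ) := by
        funext k; cases k <;> rfl
      have hsingle : (Sum.elim (Pi.single j 1) (0 : Fin s → ℂ) : Fin s ⊕ Fin s → ℂ)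
          = Pi.single (Sum.inl j) 1 := by
        funext k
        cases k with
        | inl k => simp [Pi.single_apply, Sum.inl.injEq]
        | inr k => simp [Pi.single_apply]
      rw [hsingle] at h
      simp only [Sum.elim_inr, hz, Matrix.mulVec_zero, Pi.zero_apply,
        Matrix.mulVec_single] at h
      simpa [Matrix.toBlocks₂₁] using h
  · rintro ⟨h12, h21⟩
    refine ⟨LinearMap.ker (bcMap K.toBlocks₁₁), LinearMap.ker (bcMap K.toBlocks₂₂), ?_⟩
    intro ua ub va vb
    have hK : K = Matrix.fromBlocks K.toBlocks₁₁ 0 0 K.toBlocks₂₂ := by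
      conv_lhs => rw [← Matrix.fromBlocks_toBlocks K]
      rw [h12, h21]
    have hKm : K - 1 = Matrix.fromBlocks (K.toBlocks₁₁ - 1) 0 0 (K.toBlocks₂₂ - 1) := by
      rw [hK, ← Matrix.fromBlocks_one, sub_eq_add_neg, Matrix.fromBlocks_neg, Matrix.fromBlocks_add]
      simp [sub_eq_add_neg]
    have hKp : K + 1 = Matrix.fromBlocks (K.toBlocks₁₁ + 1) 0 0 (K.toBlocks₂₂ + 1) := by
      rw [hK, ← Matrix.fromBlocks_one, Matrix.fromBlocks_add]
      simp
    rw [hKm, hKp, Matrix.fromBlocks_mulVec, Matrix.fromBlocks_mulVec]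
    simp only [Matrix.zero_mulVec, add_zero, zero_add, Sum.elim_comp_inl, Sum.elim_comp_inr]
    rw [elim_smul, elim_add, elim_eq_zero, mem_bcker, mem_bcker]


end SL
end
end
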